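/- arXiv:2605.06589 — 2 statements merged into one kernel-verified Lean document; each statement's English description precedes it below -/
import Mathlib

section
/- (Maximum principle / upper bound on φ.) Let φ : [t,T] → ℝⁿ be a C¹ solution of φ̇(s) = H(ρ(s), ∇_G φ(s)) − Δ_G φ(s) on (t,T), where H satisfies Hᵢ(μ,p) ≥ −C₁ for all i, μ, p. Then max_i φᵢ(s) ≤ C₁(T−s) + max_i φᵢ(T) for all s ∈ [t,T]. -/
open Set Filter Topology

/-- Graph divergence of a matrix m: (∇_G · m)ⁱ = Σ_{j≠i} √(ω_{ij}) m^{ji}. -/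
noncomputable def divG {n : ℕ} (ω : Fin n → Fin n → ℝ) (m : Fin n → Fin n → ℝ)
    (i : Fin n) : ℝ :=
  ∑ j ∈ Finset.univ.erase i, Real.sqrt (ω i j) * m j i

/-- Weighted graph gradient: (∇_G u)^{ij} = √(ω_{ij})(uⁱ - uʲ). -/
noncomputable def gradG {n : ℕ} (ω : Fin n → Fin n → ℝ) (u : Fin n → ℝ)
    (i j : Fin n) : ℝ :=
  Real.sqrt (ω i j) * (u i - u j)

/-- Inner product of matrices over the edge set E = {(i,j) : ω_{ij} > 0}:
(m, m̃) = (1/2) Σ_{(i,j)∈E} m^{ij} m̃^{ij}. -/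
noncomputable def innerS {n : ℕ} (ω : Fin n → Fin n → ℝ) (m m' : Fin n → Fin n → ℝ) : ℝ :=
  (1 / 2) * ∑ i, ∑ j, (if 0 < ω i j then m i j * m' i j else 0)

/-- Graph Laplacian: (Δ_G u)ⁱ = Σⱼ ω_{ij}(uʲ - uⁱ). -/
noncomputable def lapG {n : ℕ} (ω : Fin n → Fin n → ℝ) (u : Fin n → ℝ) (i : Fin n) : ℝ :=
  ∑ j, ω i j * (u j - u i)

/-- Maximum principle / upper bound on φ: if φ̇(s) = H(ρ(s), ∇_G φ(s)) − Δ_G φ(s) on (t,T)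
with Hᵢ ≥ −C₁, then max_i φᵢ(s) ≤ C₁(T−s) + max_i φᵢ(T) for s ∈ [t,T]. -/
theorem max_principle_upper_bound (n : ℕ) (ω : Fin (n + 1) → Fin (n + 1) → ℝ)
    (hωn : ∀ i j, 0 ≤ ω i j) (t T C₁ : ℝ) (htT : t ≤ T)
    (H : (Fin (n + 1) → ℝ) → (Fin (n + 1) → Fin (n + 1) → ℝ) → Fin (n + 1) → ℝ)
    (hH : ∀ μ p i, -C₁ ≤ H μ p i)
    (ρ φ : ℝ → Fin (n + 1) → ℝ)
    (hρ : ∀ s ∈ Set.Icc t T, ∀ i, 0 < ρ s i ∧ ρ s i < 1)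
    (hρc : ContinuousOn ρ (Set.Icc t T))
    (hφc : ContinuousOn φ (Set.Icc t T))
    (hφ : ∀ s ∈ Set.Ioo t T,
      HasDerivAt φ (fun i => H (ρ s) (gradG ω (φ s)) i - lapG ω (φ s) i) s) :
    ∀ s ∈ Set.Icc t T, ∀ i,
      φ s i ≤ C₁ * (T - s) + Finset.univ.sup' Finset.univ_nonempty (φ T) := by
  set M : ℝ → ℝ := fun s => Finset.univ.sup' Finset.univ_nonempty (φ s) with hMdef
  have hφci : ∀ i : Fin (n+1), ContinuousOn (fun s => φ s i) (Set.Icc t T) := fun i =>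
    (continuous_apply i).comp_continuousOn hφc
  have hMc : ContinuousOn M (Set.Icc t T) :=
    ContinuousOn.finset_sup'_apply Finset.univ_nonempty fun i _ => hφci i
  have hφleM : ∀ s i, φ s i ≤ M s := fun s i =>
    Finset.le_sup' (φ s) (Finset.mem_univ i)
  -- derivative bound at a maximizing index
  have hderiv : ∀ σ ∈ Set.Ioo t T, ∀ j, φ σ j = M σ →
      -(H (ρ σ) (gradG ω (φ σ)) j - lapG ω (φ σ) j) ≤ C₁ := by
    intro σ hσ j hj
    have hlap : lapG ω (φ σ) j ≤ 0 := by
      apply Finset.sum_nonpos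
      intro k _
      have h1 : φ σ k ≤ φ σ j := hj ▸ hφleM σ k
      have h2 := hωn j k
      nlinarith
    have := hH (ρ σ) (gradG ω (φ σ)) j
    linarith
  -- main estimate on [t, T'] for T' < T and ε > 0
  have main : ∀ T' ∈ Set.Ioo t T, ∀ ε : ℝ, 0 < ε → ∀ s ∈ Set.Icc t T',
      M s ≤ M T' + (C₁ + ε) * (T' - s) := by
    intro T' hT' ε hε s hs
    set c : ℝ := t + T' with hc
    have hIccsub : Set.Icc t T' ⊆ Set.Icc t T := Set.Icc_subset_Icc le_rfl hT'.2.le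
    have himg : ∀ u ∈ Set.Icc t T', c - u ∈ Set.Icc t T' := fun u hu =>
      ⟨by simp only [hc]; linarith [hu.2], by simp only [hc]; linarith [hu.1]⟩
    set f : ℝ → ℝ := fun u => M (c - u) with hf
    have hfc : ContinuousOn f (Set.Icc t T') := by
      apply hMc.comp (Continuous.continuousOn (by continuity))
      intro u hu
      exact hIccsub (himg u hu)
    -- the liminf slope condition
    have hf' : ∀ x ∈ Set.Ico t T', ∀ r : ℝ, C₁ < r →
        ∃ᶠ z in 𝓝[>] x, slope f x z < r := by
      intro x hx r hr
      have hxT' : x < T' := hx.2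
      have hσx : c - x ∈ Set.Ioo t T := ⟨by simp only [hc]; linarith, by
        have : t ≤ x := hx.1
        simp only [hc]; linarith [hT'.2]⟩
      -- find a single index attaining the max frequently to the right of x
      have hjex : ∃ j : Fin (n+1), ∃ᶠ z in 𝓝[>] x, z ∈ Set.Ioo x T' ∧ f z = φ (c - z) j := by
        by_contra hco
        push_neg at hco
        have hev : ∀ᶠ z in 𝓝[>] x, ∀ j : Fin (n+1),
            ¬(z ∈ Set.Ioo x T' ∧ f z = φ (c - z) j) := by
          rw [Filter.eventually_all]
          intro j
          exact (hco j).mono fun z hz h => hz h.1 h.2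
        have hmem : ∀ᶠ z in 𝓝[>] x, z ∈ Set.Ioo x T' :=
          Ioo_mem_nhdsGT_of_mem ⟨le_rfl, hxT'⟩
        obtain ⟨z, h1, h2⟩ := (hev.and hmem).exists
        obtain ⟨j, _, hj⟩ := Finset.exists_mem_eq_sup' (Finset.univ_nonempty) (φ (c - z))
        exact h1 j ⟨h2, hj⟩
      obtain ⟨j, hjf⟩ := hjex
      -- j attains the max at x as well, by continuity
      have hxIcc : x ∈ Set.Icc t T' := ⟨hx.1, hx.2.le⟩
      have hle1 : 𝓝[>] x ≤ 𝓝[Set.Icc t T'] x := by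
        rw [← nhdsWithin_Ioo_eq_nhdsGT hxT']
        exact nhdsWithin_mono x fun z hz => ⟨hx.1.trans hz.1.le, hz.2.le⟩
      have hgc : ContinuousOn (fun z => φ (c - z) j) (Set.Icc t T') := by
        apply (hφci j).comp (Continuous.continuousOn (by continuity))
        intro u hu
        exact hIccsub (himg u hu)
      have htf : Filter.Tendsto f (𝓝[>] x) (𝓝 (f x)) :=
        (hfc x hxIcc).mono_left hle1
      have htg : Filter.Tendsto (fun z => φ (c - z) j) (𝓝[>] x) (𝓝 (φ (c - x) j)) :=
        (hgc x hxIcc).mono_left hle1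
      have hfx : f x = φ (c - x) j :=
        tendsto_nhds_unique_of_frequently_eq htf htg (hjf.mono fun z hz => hz.2)
      -- the derivative of z ↦ φ (c - z) j at x
      have hdj : HasDerivAt (fun u => φ u j)
          (H (ρ (c - x)) (gradG ω (φ (c - x))) j - lapG ω (φ (c - x)) j) (c - x) := by
        have := ((ContinuousLinearMap.proj (R := ℝ) (φ := fun _ : Fin (n+1) => ℝ) j).hasFDerivAt.comp
          (c - x) (hφ (c - x) hσx).hasFDerivAt).hasDerivAt
        simpa [Function.comp_def] using this
      have hneg : HasDerivAt (fun z => φ (c - z) j)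
          (-(H (ρ (c - x)) (gradG ω (φ (c - x))) j - lapG ω (φ (c - x)) j)) x := by
        have h2 : HasDerivAt (fun z : ℝ => c - z) (-1) x := by
          simpa using (hasDerivAt_id x).const_sub c
        simpa [Function.comp_def] using hdj.comp x h2
      have hmax : φ (c - x) j = M (c - x) := hfx.symm
      have hltr : -(H (ρ (c - x)) (gradG ω (φ (c - x))) j - lapG ω (φ (c - x)) j) < r :=
        lt_of_le_of_lt (hderiv (c - x) hσx j hmax) hr
      have hslope : ∀ᶠ z in 𝓝[≠] x, slope (fun z => φ (c - z) j) x z < r :=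
        (hasDerivAt_iff_tendsto_slope.mp hneg) (Iio_mem_nhds hltr)
      have hslope' : ∀ᶠ z in 𝓝[>] x, slope (fun z => φ (c - z) j) x z < r :=
        hslope.filter_mono (nhdsWithin_mono x
          (show Set.Ioi x ⊆ {x}ᶜ from fun z hz => Set.mem_compl_singleton_iff.mpr (LT.lt.ne' hz)))
      refine (hjf.and_eventually hslope').mono ?_
      rintro z ⟨⟨hzI, hfz⟩, hsl⟩
      have heqs : slope f x z = slope (fun z => φ (c - z) j) x z := by
        rw [slope_def_field, slope_def_field, hfz, hfx]
      rw [heqs]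
      exact hsl
    have happ := image_le_of_liminf_slope_right_lt_deriv_boundary (f := f)
      (f' := fun _ => C₁) (a := t) (b := T')
      (B := fun u => M T' + (C₁ + ε) * (u - t)) (B' := fun _ => C₁ + ε)
      hfc hf'
      (by
        show M (c - t) ≤ M T' + (C₁ + ε) * (t - t)
        simp [hc])
      (fun x => by
        have := (((hasDerivAt_id x).sub_const t).const_mul (C₁ + ε)).const_add (M T')
        simpa using this)
      (fun x _ _ => by show C₁ < C₁ + ε; linarith)
    have hcs : c - s ∈ Set.Icc t T' := himg s hs
    have := happ hcs
    simp only [hf, hc] at this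
    have heq : t + T' - (t + T' - s) = s := by ring
    rw [heq] at this
    linarith [this]
  -- conclude
  intro s hs i
  rcases eq_or_lt_of_le hs.2 with hsT | hsT
  · subst hsT
    have := hφleM s i
    simp only [sub_self, mul_zero, zero_add]
    exact this.trans_eq rfl
  · -- s < T
    have hst : t ≤ s := hs.1
    have hMs : ∀ ε : ℝ, 0 < ε → M s ≤ M T + (C₁ + ε) * (T - s) := by
      intro ε hε
      have hne : (𝓝[Set.Ioo s T] T).NeBot := right_nhdsWithin_Ioo_neBot hsT
      have hsub : Set.Ioo s T ⊆ Set.Icc t T := fun u hu => ⟨hst.trans hu.1.le, hu.2.le⟩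
      have htend : Filter.Tendsto (fun T' => M T' + (C₁ + ε) * (T' - s))
          (𝓝[Set.Ioo s T] T) (𝓝 (M T + (C₁ + ε) * (T - s))) := by
        apply Filter.Tendsto.add
        · exact (hMc T ⟨htT, le_rfl⟩).mono_left (nhdsWithin_mono T hsub)
        · exact ((continuous_const.mul (continuous_id.sub continuous_const)).tendsto T).mono_left
            nhdsWithin_le_nhds
      refine ge_of_tendsto htend ?_
      filter_upwards [self_mem_nhdsWithin] with T' hT'
      exact main T' ⟨lt_of_le_of_lt hst hT'.1, hT'.2⟩ ε hε s ⟨hst, hT'.1.le⟩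
    have hfinal : M s ≤ M T + C₁ * (T - s) := by
      have hTs : 0 < T - s := by linarith
      refine le_of_forall_pos_le_add ?_
      intro δ hδ
      have := hMs (δ / (T - s)) (div_pos hδ hTs)
      have hmul : δ / (T - s) * (T - s) = δ := div_mul_cancel₀ δ (ne_of_gt hTs)
      nlinarith
    calc φ s i ≤ M s := hφleM s i
      _ ≤ M T + C₁ * (T - s) := hfinal
      _ = C₁ * (T - s) + M T := by ring
end

section
/- (Lasry–Lions estimate.) Let (φ,ρ) be a C¹ solution on [t,T] of the system φ̇ = H(ρ, λ∇_G φ) − Δ_G φ, ρ̇ = ∇_G·B(ρ, λ∇_G φ) + Δ_G ρ with λ ∈ [0,1], where (B(μ,p),p) ≥ (H(μ,p),μ) − C₁ and Hᵢ(μ,p) ≥ −C₁ for all i. Then λ(φ(T), ρ(T)) ≤ λ(φ(t), ρ(t)) + 2C₁(T−t). -/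
lemma lap_symm {n : ℕ} (ω : Fin n → Fin n → ℝ) (hωs : ∀ i j, ω i j = ω j i)
    (u v : Fin n → ℝ) : ∑ i, u i * lapG ω v i = ∑ i, v i * lapG ω u i := by
  unfold lapG
  simp only [Finset.mul_sum, mul_sub, Finset.sum_sub_distrib]
  congr 1
  · rw [Finset.sum_comm]
    exact Finset.sum_congr rfl fun i _ => Finset.sum_congr rfl fun j _ => by
      rw [hωs j i]; ring
  · exact Finset.sum_congr rfl fun i _ => Finset.sum_congr rfl fun j _ => by ring

lemma div_parts {n : ℕ} (ω : Fin n → Fin n → ℝ) (hωs : ∀ i j, ω i j = ω j i)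
    (hωn : ∀ i j, 0 ≤ ω i j) (m : Fin n → Fin n → ℝ)
    (hm : ∀ i j, m j i = - m i j) (u : Fin n → ℝ) :
    ∑ i, u i * divG ω m i = - innerS ω m (gradG ω u) := by
  have hm0 : ∀ i, m i i = 0 := fun i => by have := hm i i; linarith
  have hsq : ∀ i j, ¬ 0 < ω i j → Real.sqrt (ω i j) = 0 := fun i j h => by
    rw [le_antisymm (not_lt.1 h) (hωn i j), Real.sqrt_zero]
  have hdiv : ∀ i, u i * divG ω m i = ∑ j, Real.sqrt (ω i j) * m j i * u i := by
    intro i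
    rw [divG, Finset.sum_erase_eq_sub (Finset.mem_univ i), hm0, mul_zero, sub_zero,
      Finset.mul_sum]
    exact Finset.sum_congr rfl fun j _ => by ring
  have hinner : innerS ω m (gradG ω u)
      = (1/2) * ∑ i, ∑ j, m i j * Real.sqrt (ω i j) * (u i - u j) := by
    rw [innerS]
    congr 1
    refine Finset.sum_congr rfl fun i _ => Finset.sum_congr rfl fun j _ => ?_
    rw [gradG]
    by_cases h : 0 < ω i j
    · simp [h]; ring
    · simp [h, hsq i j h]
  simp only [hdiv, hinner]
  have key : ∑ i, ∑ j, m i j * Real.sqrt (ω i j) * u j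
      = - ∑ i, ∑ j, m i j * Real.sqrt (ω i j) * u i := by
    rw [Finset.sum_comm, ← Finset.sum_neg_distrib]
    refine Finset.sum_congr rfl fun i _ => ?_
    rw [← Finset.sum_neg_distrib]
    refine Finset.sum_congr rfl fun j _ => ?_
    rw [hm i j, hωs j i]; ring
  simp only [mul_sub, Finset.sum_sub_distrib, key]
  have : ∑ i, ∑ j, Real.sqrt (ω i j) * m j i * u i
      = - ∑ i, ∑ j, m i j * Real.sqrt (ω i j) * u i := by
    rw [← Finset.sum_neg_distrib]
    refine Finset.sum_congr rfl fun i _ => ?_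
    rw [← Finset.sum_neg_distrib]
    refine Finset.sum_congr rfl fun j _ => ?_
    rw [hm i j]; ring
  rw [this]; ring

lemma innerS_smul {n : ℕ} (ω : Fin n → Fin n → ℝ) (m g : Fin n → Fin n → ℝ) (c : ℝ) :
    innerS ω m (fun i j => c * g i j) = c * innerS ω m g := by
  unfold innerS
  rw [Finset.mul_sum]
  simp only [Finset.mul_sum]
  ring_nf
  refine Finset.sum_congr rfl fun i _ => Finset.sum_congr rfl fun j _ => ?_
  by_cases h : 0 < ω i j <;> simp [h] <;> ring_nf

/-- Lasry–Lions estimate: for a C¹ solution (φ,ρ) of the homotopic MFG system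
φ̇ = H(ρ, λ∇_G φ) − Δ_G φ, ρ̇ = ∇_G·B(ρ, λ∇_G φ) + Δ_G ρ, with coercivity
(B(μ,p),p) ≥ (H(μ,p),μ) − C₁ and Hᵢ ≥ −C₁, one has
λ(φ(T), ρ(T)) ≤ λ(φ(t), ρ(t)) + 2C₁(T−t). -/
theorem lasry_lions_estimate (n : ℕ) (ω : Fin n → Fin n → ℝ)
    (hωs : ∀ i j, ω i j = ω j i) (hωn : ∀ i j, 0 ≤ ω i j)
    (t T C₁ lam : ℝ) (htT : t ≤ T) (hlam : lam ∈ Set.Icc (0 : ℝ) 1)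
    (H : (Fin n → ℝ) → (Fin n → Fin n → ℝ) → Fin n → ℝ)
    (B : (Fin n → ℝ) → (Fin n → Fin n → ℝ) → Fin n → Fin n → ℝ)
    (hBskew : ∀ μ p i j, B μ p j i = - B μ p i j)
    (hcoer : ∀ μ p, (∀ i, 0 < μ i ∧ μ i < 1) → (∀ i j, p j i = - p i j) →
      innerS ω (B μ p) p ≥ (∑ i, H μ p i * μ i) - C₁)
    (hH : ∀ μ p i, (∀ i, 0 < μ i ∧ μ i < 1) → (∀ i j, p j i = - p i j) → -C₁ ≤ H μ p i)
    (φ ρ : ℝ → Fin n → ℝ)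
    (hρsim : ∀ s ∈ Set.Icc t T, (∀ i, 0 < ρ s i ∧ ρ s i < 1) ∧ ∑ i, ρ s i = 1)
    (hφc : ContinuousOn φ (Set.Icc t T)) (hρc : ContinuousOn ρ (Set.Icc t T))
    (hφ : ∀ s ∈ Set.Ioo t T,
      HasDerivAt φ (fun i =>
        H (ρ s) (fun i j => lam * gradG ω (φ s) i j) i - lapG ω (φ s) i) s)
    (hρ : ∀ s ∈ Set.Ioo t T,
      HasDerivAt ρ (fun i =>
        divG ω (B (ρ s) (fun i j => lam * gradG ω (φ s) i j)) i + lapG ω (ρ s) i) s) :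
    lam * (∑ i, φ T i * ρ T i) ≤ lam * (∑ i, φ t i * ρ t i) + 2 * C₁ * (T - t) := by
  -- skewness of the momentum variable
  have pskew : ∀ s : ℝ, ∀ i j : Fin n,
      (fun i j => lam * gradG ω (φ s) i j) j i = -((fun i j => lam * gradG ω (φ s) i j) i j) := by
    intro s i j
    simp only [gradG, hωs j i]
    ring
  -- lower bound for ∑ H μ p i * μ i
  have hAlb : ∀ s ∈ Set.Icc t T, ∀ p : Fin n → Fin n → ℝ, (∀ i j, p j i = - p i j) →
      -C₁ ≤ ∑ i, H (ρ s) p i * ρ s i := by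
    intro s hs p hp
    have hpos := (hρsim s hs).1
    have hsum := (hρsim s hs).2
    calc -C₁ = ∑ i, -C₁ * ρ s i := by rw [← Finset.mul_sum, hsum, mul_one]
      _ ≤ ∑ i, H (ρ s) p i * ρ s i :=
        Finset.sum_le_sum fun i _ =>
          mul_le_mul_of_nonneg_right (hH _ p i hpos hp) (hpos i).1.le
  -- C₁ is nonnegative
  have hC1 : 0 ≤ C₁ := by
    have htmem : t ∈ Set.Icc t T := ⟨le_refl t, htT⟩
    have hz : ∀ i j : Fin n, (fun _ _ => (0:ℝ)) j i = -((fun _ _ => (0:ℝ)) i j) := by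
      intro i j; simp
    have h1 := hcoer (ρ t) (fun _ _ => (0:ℝ)) (hρsim t htmem).1 hz
    have h2 := hAlb t htmem (fun _ _ => (0:ℝ)) hz
    have h0 : innerS ω (B (ρ t) (fun _ _ => (0:ℝ))) (fun _ _ => (0:ℝ)) = 0 := by
      simp [innerS]
    rw [h0] at h1
    linarith
  -- the key derivative bound
  have key : ∀ s ∈ Set.Ioo t T,
      lam * ∑ i, ((H (ρ s) (fun i j => lam * gradG ω (φ s) i j) i - lapG ω (φ s) i) * ρ s i
        + φ s i * (divG ω (B (ρ s) (fun i j => lam * gradG ω (φ s) i j)) i + lapG ω (ρ s) i))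
      ≤ 2 * C₁ := by
    intro s hs
    have hsI : s ∈ Set.Icc t T := ⟨hs.1.le, hs.2.le⟩
    set p : Fin n → Fin n → ℝ := fun i j => lam * gradG ω (φ s) i j with hp
    set m : Fin n → Fin n → ℝ := B (ρ s) p with hmdef
    have mskew : ∀ i j, m i j = - m j i := fun i j => (neg_eq_iff_eq_neg.2 (hBskew (ρ s) p i j)).symm
    set A : ℝ := ∑ i, H (ρ s) p i * ρ s i with hA
    have h2 : ∑ i, φ s i * divG ω m i = - innerS ω m (gradG ω (φ s)) :=
      div_parts ω hωs hωn m (fun i j => hBskew (ρ s) p i j) (φ s)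
    have h3 : ∑ i, lapG ω (φ s) i * ρ s i = ∑ i, φ s i * lapG ω (ρ s) i :=
      (Finset.sum_congr rfl fun i _ => mul_comm _ _).trans (lap_symm ω hωs (ρ s) (φ s))
    have esum : ∑ i, ((H (ρ s) p i - lapG ω (φ s) i) * ρ s i
        + φ s i * (divG ω m i + lapG ω (ρ s) i))
        = A - innerS ω m (gradG ω (φ s)) := by
      simp only [sub_mul, mul_add, Finset.sum_add_distrib, Finset.sum_sub_distrib]
      rw [hA]
      linarith [h2, h3]
    have hsm : innerS ω m p = lam * innerS ω m (gradG ω (φ s)) := innerS_smul ω m _ lam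
    have hcoe := hcoer (ρ s) p (hρsim s hsI).1 (pskew s)
    have hAl := hAlb s hsI p (pskew s)
    rw [esum]
    rw [← hA] at hAl hcoe
    rw [← hmdef, hsm] at hcoe
    nlinarith [mul_nonneg (by linarith [hlam.2] : (0:ℝ) ≤ 1 - lam) (by linarith : (0:ℝ) ≤ A + C₁),
      mul_nonneg hlam.1 hC1]
  -- the auxiliary function h(s) = lam * ∑ φ s i * ρ s i - 2C₁ s is antitone on [t,T]
  set F : ℝ → ℝ := fun s => lam * (∑ i, φ s i * ρ s i) - 2 * C₁ * s with hFdef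
  have hFd : ∀ s ∈ Set.Ioo t T, HasDerivAt F
      (lam * (∑ i, ((H (ρ s) (fun i j => lam * gradG ω (φ s) i j) i - lapG ω (φ s) i) * ρ s i
        + φ s i * (divG ω (B (ρ s) (fun i j => lam * gradG ω (φ s) i j)) i + lapG ω (ρ s) i)))
        - 2 * C₁ * 1) s := by
    intro s hs
    have h1 := hφ s hs
    have h2 := hρ s hs
    have hsum : HasDerivAt (fun s => ∑ i, φ s i * ρ s i)
        (∑ i, ((H (ρ s) (fun i j => lam * gradG ω (φ s) i j) i - lapG ω (φ s) i) * ρ s i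
          + φ s i * (divG ω (B (ρ s) (fun i j => lam * gradG ω (φ s) i j)) i + lapG ω (ρ s) i))) s :=
      HasDerivAt.fun_sum fun i _ => ((hasDerivAt_pi.1 h1 i).mul (hasDerivAt_pi.1 h2 i))
    exact (hsum.const_mul lam).sub ((hasDerivAt_id s).const_mul (2 * C₁))
  have hFc : ContinuousOn F (Set.Icc t T) := by
    apply ContinuousOn.sub
    · apply continuousOn_const.mul
      apply continuousOn_finset_sum
      intro i _
      exact ((continuous_apply i).comp_continuousOn hφc).mul
        ((continuous_apply i).comp_continuousOn hρc)
    · exact (continuous_const.mul continuous_id).continuousOn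
  have hint : interior (Set.Icc t T) = Set.Ioo t T := interior_Icc
  have hanti : AntitoneOn F (Set.Icc t T) := by
    apply antitoneOn_of_deriv_nonpos (convex_Icc t T) hFc
    · rw [hint]
      exact fun x hx => (hFd x hx).differentiableAt.differentiableWithinAt
    · intro x hx
      rw [hint] at hx
      rw [(hFd x hx).deriv]
      have := key x hx
      linarith
  have := hanti ⟨le_refl t, htT⟩ ⟨htT, le_refl T⟩ htT
  simp only [hFdef] at this
  linarith
end
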